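/- Let G be a finite tree with vertex set V, |V| ≥ 3; for v ∈ V let tᵥ be its degree and t′ᵥ the number of its neighbors of degree ≥ 2. Let d : V → ℤ and let M be the V×V symmetric matrix with M_{vv} = −dᵥ, M_{vw} = 1 if v and w are adjacent, 0 otherwise. Let Z ∈ ℤ^V be the vector with Zᵥ = 2 if deg v ≥ 2 and Zᵥ = 1 if v is a leaf. Suppose v₀ is a vertex of degree ≥ 2, that every other vertex v ≠ v₀ of degree ≥ 2 satisfies dᵥ = tᵥ + t′ᵥ − 2, and that Zᵀ M Z + Σ_{v∈V} Zᵥ·(dᵥ − 2) ≤ −2. Then d_{v₀} ≥ t_{v₀} + t′_{v₀} − 1. -/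

import Mathlib

open Finset

private lemma walk_closed {V : Type*} (G : SimpleGraph V) (A : Set V)
    (hA : ∀ a ∈ A, ∀ b, G.Adj a b → b ∈ A) :
    ∀ {x y : V}, G.Walk x y → x ∈ A → y ∈ A := by
  intro x y p
  induction p with
  | nil => exact id
  | cons h p ih => exact fun hx => ih (hA _ hx _ h)

private lemma degree_one_le {V : Type*} [Fintype V] [DecidableEq V]
    (G : SimpleGraph V) [DecidableRel G.Adj] (hc : G.Connected)
    (h2 : 2 ≤ Fintype.card V) (v : V) : 1 ≤ G.degree v := by
  by_contra h
  have hdeg : G.degree v = 0 := by omega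
  obtain ⟨u, hu⟩ := Fintype.exists_ne_of_one_lt_card (by omega) v
  obtain ⟨p⟩ := hc.preconnected v u
  have hmem : u ∈ ({v} : Set V) := by
    refine walk_closed G {v} ?_ p rfl
    intro a ha b hab
    exfalso
    rw [Set.mem_singleton_iff] at ha
    rw [ha] at hab
    have hb : b ∈ G.neighborFinset v := by
      rw [SimpleGraph.mem_neighborFinset]; exact hab
    rw [Finset.card_eq_zero.mp hdeg] at hb
    exact absurd hb (Finset.notMem_empty b)
  exact hu hmem

theorem stmt_11 {V : Type*} [Fintype V] [DecidableEq V]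
    (G : SimpleGraph V) [DecidableRel G.Adj]
    (hG : G.IsTree) (h3 : 3 ≤ Fintype.card V)
    (d : V → ℤ)
    (M : Matrix V V ℤ)
    (hM : ∀ v w, M v w = if v = w then -d v else if G.Adj v w then 1 else 0)
    (Z : V → ℤ) (hZ : ∀ v, Z v = if 2 ≤ G.degree v then 2 else 1)
    (v₀ : V) (hv₀ : 2 ≤ G.degree v₀)
    (hother : ∀ v, v ≠ v₀ → 2 ≤ G.degree v →
      d v = (G.degree v : ℤ) +
        (((G.neighborFinset v).filter fun w => 2 ≤ G.degree w).card : ℤ) - 2)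
    (hrat : dotProduct Z (M.mulVec Z) + ∑ v, Z v * (d v - 2) ≤ -2) :
    (G.degree v₀ : ℤ) +
        (((G.neighborFinset v₀).filter fun w => 2 ≤ G.degree w).card : ℤ) - 1 ≤ d v₀ := by
  have hc : G.Connected := hG.isConnected
  -- the neighbor of a leaf is internal
  have hleaf : ∀ v : V, ¬ 2 ≤ G.degree v → G.degree v = 1 ∧
      (((G.neighborFinset v).filter fun w => 2 ≤ G.degree w).card : ℤ) = 1 := by
    intro v hv
    have h1 : G.degree v = 1 := le_antisymm (by omega) (degree_one_le G hc (by omega) v)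
    obtain ⟨w, hw⟩ := Finset.card_eq_one.mp h1
    have hadj : G.Adj v w := by
      rw [← SimpleGraph.mem_neighborFinset, hw]; exact Finset.mem_singleton_self w
    have hwdeg : 2 ≤ G.degree w := by
      by_contra hwd
      have hw1 : G.degree w = 1 := le_antisymm (by omega) (degree_one_le G hc (by omega) w)
      obtain ⟨u, hu⟩ := Finset.card_eq_one.mp hw1
      have huv : u = v := by
        have hv' : v ∈ G.neighborFinset w := by
          rw [SimpleGraph.mem_neighborFinset]; exact hadj.symm
        rw [hu, Finset.mem_singleton] at hv'; exact hv'.symm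
      rw [huv] at hu
      -- {v, w} is closed under adjacency, contradicting card ≥ 3
      obtain ⟨z, hzv, hzw⟩ : ∃ z : V, z ≠ v ∧ z ≠ w := by
        by_contra hno
        push_neg at hno
        have hsub : (Finset.univ : Finset V) ⊆ {v, w} := by
          intro z _
          rcases eq_or_ne z v with rfl | hzv
          · exact Finset.mem_insert_self _ _
          · simp [hno z hzv]
        have hcard := Finset.card_le_card hsub
        simp only [Finset.card_univ] at hcard
        have h2 : ({v, w} : Finset V).card ≤ 2 :=
          (Finset.card_insert_le _ _).trans (by simp)
        omega
      obtain ⟨p⟩ := hc.preconnected v z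
      have hmem : z ∈ ({v, w} : Set V) := by
        refine walk_closed G {v, w} ?_ p (Or.inl rfl)
        intro a ha b hab
        rcases ha with ha | ha
        · rw [ha] at hab
          have hb : b ∈ G.neighborFinset v := by
            rw [SimpleGraph.mem_neighborFinset]; exact hab
          rw [hw, Finset.mem_singleton] at hb
          exact Or.inr hb
        · rw [ha] at hab
          have hb : b ∈ G.neighborFinset w := by
            rw [SimpleGraph.mem_neighborFinset]; exact hab
          rw [hu, Finset.mem_singleton] at hb
          exact Or.inl hb
      rcases hmem with h | h
      · exact hzv h
      · exact hzw h
    refine ⟨h1, ?_⟩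
    rw [hw, Finset.filter_singleton, if_pos hwdeg]
    simp
  -- sum of Z over neighbors
  have hsumZ : ∀ v : V, ∑ w ∈ G.neighborFinset v, Z w = (G.degree v : ℤ) +
      (((G.neighborFinset v).filter fun w => 2 ≤ G.degree w).card : ℤ) := by
    intro v
    have hZw : ∀ w, Z w = 1 + (if 2 ≤ G.degree w then (1 : ℤ) else 0) := by
      intro w; rw [hZ]; split_ifs <;> ring
    rw [Finset.sum_congr rfl fun w _ => hZw w, Finset.sum_add_distrib, Finset.sum_const,
      Finset.sum_boole, nsmul_eq_mul]
    rw [show G.degree v = (G.neighborFinset v).card from rfl]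
    ring
  -- mulVec formula
  have hmv : ∀ v : V, M.mulVec Z v = -d v * Z v + ((G.degree v : ℤ) +
      (((G.neighborFinset v).filter fun w => 2 ≤ G.degree w).card : ℤ)) := by
    intro v
    have hdef : M.mulVec Z v = ∑ w, M v w * Z w := rfl
    rw [hdef]
    have heq : ∀ w, M v w * Z w =
        (if v = w then -d v * Z w else 0) + (if G.Adj v w then Z w else 0) := by
      intro w
      rw [hM]
      rcases eq_or_ne v w with rfl | hne
      · simp [G.irrefl]
      · simp only [if_neg hne]
        split_ifs <;> ring
    rw [Finset.sum_congr rfl fun w _ => heq w, Finset.sum_add_distrib,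
      Finset.sum_ite_eq (Finset.univ : Finset V) v (fun w => -d v * Z w)]
    simp only [Finset.mem_univ, if_pos]
    congr 1
    rw [← hsumZ v, SimpleGraph.neighborFinset_eq_filter, Finset.sum_filter]
  -- the total sum
  set f : V → ℤ := fun v => Z v * (d v * (1 - Z v) + ((G.degree v : ℤ) +
      (((G.neighborFinset v).filter fun w => 2 ≤ G.degree w).card : ℤ)) - 2) with hfdef
  have htot : dotProduct Z (M.mulVec Z) + ∑ v, Z v * (d v - 2) = ∑ v, f v := by
    rw [dotProduct, ← Finset.sum_add_distrib]
    refine Finset.sum_congr rfl fun v _ => ?_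
    rw [hmv v, hfdef]
    ring
  have hzero : ∀ v, v ≠ v₀ → f v = 0 := by
    intro v hv
    by_cases h2 : 2 ≤ G.degree v
    · have hd := hother v hv h2
      rw [hfdef]
      simp only [hZ v, if_pos h2]
      rw [hd]; ring
    · obtain ⟨h1, ht1⟩ := hleaf v h2
      rw [hfdef]
      simp only [hZ v, if_neg h2, h1, ht1]
      push_cast
      ring
  have hfv₀ : ∑ v, f v = f v₀ :=
    Finset.sum_eq_single v₀ (fun b _ hb => hzero b hb) (fun h => absurd (Finset.mem_univ v₀) h)
  rw [htot, hfv₀] at hrat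
  have hf0 : f v₀ = 2 * (d v₀ * (1 - 2) + ((G.degree v₀ : ℤ) +
      (((G.neighborFinset v₀).filter fun w => 2 ≤ G.degree w).card : ℤ)) - 2) := by
    rw [hfdef]; simp [hZ v₀, if_pos hv₀]
  rw [hf0] at hrat
  linarith
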